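/- Let U → M be a covering by disjoint open sets and C_p(M, U) the group of U-small smooth singular p-chains of M. Choose a section τ of the pushforward υ_* : C_p(U) → C_p(M, U). Then the operator ρ defined by ρ(σ) = τ(σ) for σ ∈ C_p(M, U) and ρ(σ) = (τ ∘ υ_* ∘ pr_*(σ)) ×_M σ for σ a chain in a q-fold fiber product, is a contracting homotopy for the augmented complex 0 ← C_p(M, U) ← C_p(U) ← C_p(U ×_M U) ← ⋯; hence this complex is exact. -/

import Mathlib

open Manifold Finset
noncomputable section

/-- The `i`-th face embedding of the standard `n`-simplex into the standard `n+1`-simplex,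
as a linear map (insertion of `0` at the `i`-th vertex coordinate). -/
def faceLM (n : ℕ) (i : Fin (n + 2)) : (Fin (n + 1) → ℝ) →ₗ[ℝ] (Fin (n + 2) → ℝ) where
  toFun x j := ∑ k, if i.succAbove k = j then x k else 0
  map_add' x y := by
    funext j
    show (∑ k, if i.succAbove k = j then (x k + y k) else 0) =
      (∑ k, if i.succAbove k = j then x k else 0) + (∑ k, if i.succAbove k = j then y k else 0)
    rw [← Finset.sum_add_distrib]
    exact Finset.sum_congr rfl fun k _ => by split <;> simp
  map_smul' c x := by
    funext j
    show (∑ k, if i.succAbove k = j then (c * x k) else 0) =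
      c * ∑ k, if i.succAbove k = j then x k else 0
    rw [Finset.mul_sum]
    exact Finset.sum_congr rfl fun k _ => by split <;> simp

lemma faceLM_apply (n : ℕ) (i : Fin (n + 2)) (x : Fin (n + 1) → ℝ) (j : Fin (n + 2)) :
    faceLM n i x j = ∑ k, if i.succAbove k = j then x k else 0 := rfl

lemma faceLM_mapsTo (n : ℕ) (i : Fin (n + 2)) :
    Set.MapsTo (faceLM n i) (stdSimplex ℝ (Fin (n + 1))) (stdSimplex ℝ (Fin (n + 2))) := by
  intro x hx
  obtain ⟨hx0, hx1⟩ := hx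
  constructor
  · intro j
    rw [faceLM_apply]
    refine Finset.sum_nonneg fun k _ => ?_
    split
    · exact hx0 k
    · exact le_refl 0
  · calc ∑ j, faceLM n i x j
        = ∑ j, ∑ k, (if i.succAbove k = j then x k else 0) :=
          Finset.sum_congr rfl fun j _ => faceLM_apply n i x j
      _ = ∑ k, ∑ j, (if i.succAbove k = j then x k else 0) := Finset.sum_comm
      _ = ∑ k, x k := Finset.sum_congr rfl fun k _ => by simp [Finset.sum_ite_eq]
      _ = 1 := hx1

variable {E : Type} [NormedAddCommGroup E] [NormedSpace ℝ E]
  {H : Type} [TopologicalSpace H] (I : ModelWithCorners ℝ E H)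
  (M : Type) [TopologicalSpace M] [ChartedSpace H M]

/-- A smooth singular `n`-simplex in a manifold `M`. -/
structure SSimplex (n : ℕ) where
  toFun : (Fin (n + 1) → ℝ) → M
  smooth : ContMDiffOn 𝓘(ℝ, Fin (n + 1) → ℝ) I (⊤ : ℕ∞) toFun (stdSimplex ℝ (Fin (n + 1)))

variable {I M}

/-- The `i`-th face of a smooth singular simplex. -/
def SSimplex.face {n : ℕ} (σ : SSimplex I M (n + 1)) (i : Fin (n + 2)) : SSimplex I M n where
  toFun := σ.toFun ∘ (faceLM n i)
  smooth := by
    have h1 : ContMDiff 𝓘(ℝ, Fin (n+1) → ℝ) 𝓘(ℝ, Fin (n+2) → ℝ) (⊤ : ℕ∞) ⇑(faceLM n i) := by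
      rw [← LinearMap.coe_toContinuousLinearMap' (faceLM n i)]
      exact (ContinuousLinearMap.contDiff _).contMDiff
    exact σ.smooth.comp h1.contMDiffOn (faceLM_mapsTo n i)

variable (I M)

/-- Smooth singular chains. -/
def SChain (n : ℕ) : Type := FreeAbelianGroup (SSimplex I M n)

instance (n : ℕ) : AddCommGroup (SChain I M n) :=
  inferInstanceAs (AddCommGroup (FreeAbelianGroup (SSimplex I M n)))

/-- The boundary operator on smooth singular chains. -/
def sbd (n : ℕ) : SChain I M (n + 1) →+ SChain I M n :=
  ∑ i : Fin (n + 2), (-1 : ℤ) ^ (i : ℕ) • FreeAbelianGroup.map (fun σ => σ.face i)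

variable (R : Type) [AddCommGroup R]

/-- Smooth singular cochains with coefficients in `R`. -/
def SCochain (n : ℕ) : Type := SSimplex I M n → R

instance (n : ℕ) : AddCommGroup (SCochain I M R n) :=
  inferInstanceAs (AddCommGroup (SSimplex I M n → R))

/-- The coboundary on smooth singular cochains. -/
def scd (n : ℕ) : SCochain I M R n →+ SCochain I M R (n + 1) :=
  AddMonoidHom.mk' (fun c σ => ∑ i : Fin (n + 2), (-1 : ℤ) ^ (i : ℕ) • c (σ.face i))
    (by
      intro c c'
      funext σ
      show ∑ i : Fin (n + 2), (-1 : ℤ) ^ (i : ℕ) • (c (σ.face i) + c' (σ.face i)) =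
        (∑ i : Fin (n + 2), (-1 : ℤ) ^ (i : ℕ) • c (σ.face i)) +
          ∑ i : Fin (n + 2), (-1 : ℤ) ^ (i : ℕ) • c' (σ.face i)
      simp [smul_add, Finset.sum_add_distrib])

/-- Pairing of a cochain with a chain (evaluation / integration). -/
def pairC {n : ℕ} (c : SCochain I M R n) : SChain I M n →+ R :=
  FreeAbelianGroup.lift c

lemma pairC_add {n : ℕ} (c c' : SCochain I M R n) (x : SChain I M n) :
    pairC I M R (c + c') x = pairC I M R c x + pairC I M R c' x := by
  show FreeAbelianGroup.lift (c + c') x = FreeAbelianGroup.lift c x + FreeAbelianGroup.lift c' x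
  refine FreeAbelianGroup.induction_on (x : FreeAbelianGroup (SSimplex I M n)) (by simp)
    (fun σ => ?_) (fun y hy => ?_) ?_
  · exact (FreeAbelianGroup.lift_apply_of (c + c') σ).trans
      (congrArg₂ (· + ·) (FreeAbelianGroup.lift_apply_of c σ)
        (FreeAbelianGroup.lift_apply_of c' σ)).symm
  · simp only [map_neg, hy]; abel
  · intro y z hy hz
    simp only [map_add, hy, hz]; abel

/-- The coefficient map `ℤ → ℝ` on cochains. -/
def intToReal (n : ℕ) : SCochain I M ℤ n →+ SCochain I M ℝ n :=
  AddMonoidHom.mk' (fun c σ => ((c σ : ℤ) : ℝ))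
    (by
      intro c c'
      funext σ
      show ((c σ + c' σ : ℤ) : ℝ) = ((c σ : ℤ) : ℝ) + ((c' σ : ℤ) : ℝ)
      push_cast
      ring)

/-- Degree `n-1` part (with the convention that it is trivial for `n = 0`):
this hosts the middle ("real cochain") component of the Hopkins–Singer complex. -/
def hCompT : ℕ → Type
  | 0 => PUnit
  | (m + 1) => SCochain I M ℝ m

instance : ∀ n, AddCommGroup (hCompT I M n)
  | 0 => inferInstanceAs (AddCommGroup PUnit)
  | (m + 1) => inferInstanceAs (AddCommGroup (SCochain I M ℝ m))

/-- Differential from the `(n-1)`-st level into degree `n`. -/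
def hd : ∀ n, hCompT I M n →+ SCochain I M ℝ n
  | 0 => 0
  | (m + 1) => scd I M ℝ m

variable (Ω : ∀ n : ℕ, AddSubgroup (SCochain I M ℝ n))

/-- The Hopkins–Singer group `DC_s^n(M)`: triples `(c, h, ω)` of an integral `n`-cochain,
a real `(n-1)`-cochain and a differential form `ω` (an element of the de Rham subcomplex
`Ω ⊆ C^•_ℝ`, forms being viewed as real cochains by integration), where `ω = 0` if `n < s`. -/
def DCgrp (s n : ℕ) :
    AddSubgroup (SCochain I M ℤ n × hCompT I M n × SCochain I M ℝ n) where
  carrier := {x | x.2.2 ∈ Ω n ∧ (n < s → x.2.2 = 0)}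
  zero_mem' := ⟨(Ω n).zero_mem, fun _ => rfl⟩
  add_mem' := by
    rintro a b ⟨ha, ha'⟩ ⟨hb, hb'⟩
    exact ⟨(Ω n).add_mem ha hb, fun h => by
      show a.2.2 + b.2.2 = 0
      rw [ha' h, hb' h, add_zero]⟩
  neg_mem' := by
    rintro a ⟨ha, ha'⟩
    refine ⟨(Ω n).neg_mem ha, fun h => ?_⟩
    show -a.2.2 = 0
    rw [ha' h, neg_zero]

/-- The Hopkins–Singer differential `d(c,h,ω) = (dc, ω - c - dh, dω)`. -/
def dDC (hΩ : ∀ n x, x ∈ Ω n → scd I M ℝ n x ∈ Ω (n + 1)) (s n : ℕ) :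
    (DCgrp I M Ω s n) →+ (DCgrp I M Ω s (n + 1)) :=
  AddMonoidHom.mk'
    (fun x => ⟨(scd I M ℤ n x.1.1,
        x.1.2.2 - intToReal I M n x.1.1 - hd I M n x.1.2.1,
        scd I M ℝ n x.1.2.2),
      ⟨hΩ n _ x.2.1, fun h => by
        rw [x.2.2 (Nat.lt_of_succ_lt h)]; exact map_zero _⟩⟩)
    (by
      intro x y
      apply Subtype.ext
      simp only [AddSubgroup.coe_add, Prod.fst_add, Prod.snd_add, map_add, Prod.mk_add_mk,
        Prod.mk.injEq]
      refine ⟨trivial, Prod.ext ?_ ?_⟩ <;> (try simp only [Prod.fst_add, Prod.snd_add]) <;> abel)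

/-- Cohomology at the middle spot of a two-step complex `A → B → C`. -/
def Hq {A B C : Type*} [AddCommGroup A] [AddCommGroup B] [AddCommGroup C]
    (f : A →+ B) (g : B →+ C) : Type _ :=
  g.ker ⧸ ((f.range).addSubgroupOf g.ker)

instance {A B C : Type*} [AddCommGroup A] [AddCommGroup B] [AddCommGroup C]
    (f : A →+ B) (g : B →+ C) : AddCommGroup (Hq f g) :=
  inferInstanceAs (AddCommGroup (_ ⧸ _))

/-- Class of a cocycle in `Hq`. -/
def HqMk {A B C : Type*} [AddCommGroup A] [AddCommGroup B] [AddCommGroup C]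
    (f : A →+ B) (g : B →+ C) (b : B) (hb : b ∈ g.ker) : Hq f g :=
  QuotientAddGroup.mk (⟨b, hb⟩ : g.ker)

/-- Cycles (with the convention `Z_0 = C_0`, everything). -/
def Zcyc : ∀ n : ℕ, AddSubgroup (SChain I M n)
  | 0 => ⊤
  | (m + 1) => (sbd I M m).ker


section Stmt6

variable {E : Type} [NormedAddCommGroup E] [NormedSpace ℝ E]
  {H : Type} [TopologicalSpace H] (I : ModelWithCorners ℝ E H)
  (M : Type) [TopologicalSpace M] [ChartedSpace H M]
  {ι : Type} (U : ι → Set M) (p : ℕ)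

/-- `U`-small smooth singular `p`-simplices: those whose image lies in some `U_α`. -/
def SmallS : Type :=
  {σ : SSimplex I M p // ∃ α, Set.MapsTo σ.toFun (stdSimplex ℝ (Fin (p + 1))) (U α)}

/-- Generators of `C_p` of the `q+1`-fold fibre product `U ×_M ⋯ ×_M U`: a smooth
`p`-simplex together with `q+1` indices such that its image lies in the corresponding
intersection. -/
def GenQ (q : ℕ) : Type :=
  Σ α : Fin (q + 1) → ι,
    {σ : SSimplex I M p // Set.MapsTo σ.toFun (stdSimplex ℝ (Fin (p + 1))) (⋂ i, U (α i))}

/-- Smooth `U`-small chains of `M`. -/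
def CSmall : Type := FreeAbelianGroup (SmallS I M U p)
/-- Smooth `p`-chains of the `q+1`-fold fibre product. -/
def LvC (q : ℕ) : Type := FreeAbelianGroup (GenQ I M U p q)

instance : AddCommGroup (CSmall I M U p) :=
  inferInstanceAs (AddCommGroup (FreeAbelianGroup _))
instance (q : ℕ) : AddCommGroup (LvC I M U p q) :=
  inferInstanceAs (AddCommGroup (FreeAbelianGroup _))

/-- The pushforward `υ_*` along the covering map (forgetting the index). -/
def upsStar : LvC I M U p 0 →+ CSmall I M U p :=
  FreeAbelianGroup.map (fun x =>
    (⟨x.2.1, ⟨x.1 0, fun y hy => Set.mem_iInter.1 (x.2.2 hy) 0⟩⟩ : SmallS I M U p))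

/-- The `i`-th face projection on generators (dropping the `i`-th index). -/
def dropF (q : ℕ) (i : Fin (q + 2)) (x : GenQ I M U p (q + 1)) : GenQ I M U p q :=
  ⟨x.1 ∘ i.succAbove,
    ⟨x.2.1, fun y hy => Set.mem_iInter.2 fun j => Set.mem_iInter.1 (x.2.2 hy) (i.succAbove j)⟩⟩

/-- The simplicial differential `δ_* = ∑ (-1)^i (∂_i)_*`. -/
def delStar (q : ℕ) : LvC I M U p (q + 1) →+ LvC I M U p q :=
  ∑ i : Fin (q + 2), (-1 : ℤ) ^ (i : ℕ) • FreeAbelianGroup.map (dropF I M U p q i)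

variable (τ : SmallS I M U p → ι)

/-- `ρ` on small chains of `M`: `σ ↦ (τ σ, σ)`. -/
def rhoSmall (hτ : ∀ σ : SmallS I M U p,
    Set.MapsTo σ.1.toFun (stdSimplex ℝ (Fin (p + 1))) (U (τ σ))) :
    CSmall I M U p →+ LvC I M U p 0 :=
  FreeAbelianGroup.map (fun σ =>
    (⟨fun _ => τ σ, ⟨σ.1, fun y hy => Set.mem_iInter.2 fun _ => hτ σ hy⟩⟩ : GenQ I M U p 0))

/-- `ρ` on chains of the fibre products: `(α, σ) ↦ (cons (τ σ̄) α, σ)`, i.e.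
`ρ(σ) = (τ ∘ υ_* ∘ pr_*)(σ) ×_M σ`. -/
def rhoQ (hτ : ∀ σ : SmallS I M U p,
    Set.MapsTo σ.1.toFun (stdSimplex ℝ (Fin (p + 1))) (U (τ σ)))
    (q : ℕ) : LvC I M U p q →+ LvC I M U p (q + 1) :=
  FreeAbelianGroup.map (fun x =>
    (⟨Fin.cons (τ ⟨x.2.1, ⟨x.1 0, fun y hy => Set.mem_iInter.1 (x.2.2 hy) 0⟩⟩) x.1,
      ⟨x.2.1, by
        intro y hy
        rw [Set.mem_iInter]
        intro i
        refine Fin.cases ?_ ?_ i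
        · rw [Fin.cons_zero]
          exact hτ _ hy
        · intro j
          rw [Fin.cons_succ]
          exact Set.mem_iInter.1 (x.2.2 hy) j⟩⟩ : GenQ I M U p (q + 1)))

lemma genQ_ext {q : ℕ} {x y : GenQ I M U p q} (h1 : x.1 = y.1) (h2 : x.2.1 = y.2.1) :
    x = y := by
  obtain ⟨a, s, hs⟩ := x
  obtain ⟨b, t, ht⟩ := y
  dsimp at h1 h2
  subst h1
  subst h2
  rfl

/-- The generator-level map underlying `rhoQ`. -/
def rhoGen (hτ : ∀ σ : SmallS I M U p,
    Set.MapsTo σ.1.toFun (stdSimplex ℝ (Fin (p + 1))) (U (τ σ)))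
    {q : ℕ} (x : GenQ I M U p q) : GenQ I M U p (q + 1) :=
  ⟨Fin.cons (τ ⟨x.2.1, ⟨x.1 0, fun y hy => Set.mem_iInter.1 (x.2.2 hy) 0⟩⟩) x.1,
    ⟨x.2.1, by
      intro y hy
      rw [Set.mem_iInter]
      intro i
      refine Fin.cases ?_ ?_ i
      · rw [Fin.cons_zero]
        exact hτ _ hy
      · intro j
        rw [Fin.cons_succ]
        exact Set.mem_iInter.1 (x.2.2 hy) j⟩⟩

lemma rhoQ_of (hτ : ∀ σ : SmallS I M U p,
    Set.MapsTo σ.1.toFun (stdSimplex ℝ (Fin (p + 1))) (U (τ σ)))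
    {q : ℕ} (x : GenQ I M U p q) :
    rhoQ I M U p τ hτ q (FreeAbelianGroup.of x)
      = FreeAbelianGroup.of (rhoGen I M U p τ hτ x) :=
  FreeAbelianGroup.map_of_apply x

lemma delStar_of {q : ℕ} (x : GenQ I M U p (q + 1)) :
    delStar I M U p q (FreeAbelianGroup.of x)
      = ∑ i : Fin (q + 2), (-1 : ℤ) ^ (i : ℕ) • FreeAbelianGroup.of (dropF I M U p q i x) := by
  show (∑ i : Fin (q + 2), (-1 : ℤ) ^ (i : ℕ) • FreeAbelianGroup.map (dropF I M U p q i))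
      (FreeAbelianGroup.of x) = _
  rw [AddMonoidHom.finset_sum_apply]
  exact Finset.sum_congr rfl fun i _ => by
    rw [AddMonoidHom.smul_apply, FreeAbelianGroup.map_of_apply]

lemma dropF_zero_rhoGen (hτ : ∀ σ : SmallS I M U p,
    Set.MapsTo σ.1.toFun (stdSimplex ℝ (Fin (p + 1))) (U (τ σ)))
    {q : ℕ} (x : GenQ I M U p q) :
    dropF I M U p q 0 (rhoGen I M U p τ hτ x) = x := by
  refine genQ_ext I M U p ?_ rfl
  funext j
  show (Fin.cons (τ ⟨x.2.1, ⟨x.1 0, fun y hy => Set.mem_iInter.1 (x.2.2 hy) 0⟩⟩) x.1 :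
      Fin (q + 2) → ι) ((0 : Fin (q + 2)).succAbove j) = x.1 j
  rw [Fin.succAbove_zero, Fin.cons_succ]

lemma dropF_succ_rhoGen (hτ : ∀ σ : SmallS I M U p,
    Set.MapsTo σ.1.toFun (stdSimplex ℝ (Fin (p + 1))) (U (τ σ)))
    {q : ℕ} (j : Fin (q + 2)) (x : GenQ I M U p (q + 1)) :
    dropF I M U p (q + 1) j.succ (rhoGen I M U p τ hτ x)
      = rhoGen I M U p τ hτ (dropF I M U p q j x) := by
  refine genQ_ext I M U p ?_ rfl
  funext k
  show (Fin.cons _ x.1 : Fin (q + 3) → ι) (j.succ.succAbove k)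
      = (Fin.cons _ (x.1 ∘ j.succAbove) : Fin (q + 2) → ι) k
  refine Fin.cases ?_ ?_ k
  · rw [Fin.succ_succAbove_zero, Fin.cons_zero, Fin.cons_zero]
    rfl
  · intro m
    rw [Fin.succ_succAbove_succ, Fin.cons_succ, Fin.cons_succ]
    rfl

section

variable (hτ : ∀ σ : SmallS I M U p,
    Set.MapsTo σ.1.toFun (stdSimplex ℝ (Fin (p + 1))) (U (τ σ)))

lemma homotopy1 (x : CSmall I M U p) :
    upsStar I M U p (rhoSmall I M U p τ hτ x) = x := by
  have h : (upsStar I M U p).comp (rhoSmall I M U p τ hτ)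
      = AddMonoidHom.id (CSmall I M U p) := by
    refine FreeAbelianGroup.lift_ext _ _ fun σ => ?_
    show upsStar I M U p (rhoSmall I M U p τ hτ (FreeAbelianGroup.of σ))
        = FreeAbelianGroup.of σ
    rw [show rhoSmall I M U p τ hτ (FreeAbelianGroup.of σ) = _ from
      FreeAbelianGroup.map_of_apply σ]
    erw [show upsStar I M U p (FreeAbelianGroup.of _) = _ from
      FreeAbelianGroup.map_of_apply _]
    rfl
  exact DFunLike.congr_fun h x

lemma homotopy2 (x : LvC I M U p 0) :
    rhoSmall I M U p τ hτ (upsStar I M U p x) + delStar I M U p 0 (rhoQ I M U p τ hτ 0 x)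
      = x := by
  have h : (rhoSmall I M U p τ hτ).comp (upsStar I M U p)
      + (delStar I M U p 0).comp (rhoQ I M U p τ hτ 0)
      = AddMonoidHom.id (LvC I M U p 0) := by
    refine FreeAbelianGroup.lift_ext _ _ fun x => ?_
    show rhoSmall I M U p τ hτ (upsStar I M U p (FreeAbelianGroup.of x))
        + delStar I M U p 0 (rhoQ I M U p τ hτ 0 (FreeAbelianGroup.of x))
        = FreeAbelianGroup.of x
    rw [rhoQ_of, delStar_of]
    rw [show upsStar I M U p (FreeAbelianGroup.of x) = _ from FreeAbelianGroup.map_of_apply x]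
    erw [show rhoSmall I M U p τ hτ (FreeAbelianGroup.of _) = _ from
      FreeAbelianGroup.map_of_apply _]
    rw [Fin.sum_univ_two]
    rw [show dropF I M U p 0 0 (rhoGen I M U p τ hτ x) = x from
      dropF_zero_rhoGen I M U p τ hτ x]
    have hone : dropF I M U p 0 1 (rhoGen I M U p τ hτ x)
        = (⟨fun _ => τ ⟨x.2.1, ⟨x.1 0, fun y hy => Set.mem_iInter.1 (x.2.2 hy) 0⟩⟩,
            ⟨x.2.1, fun y hy => Set.mem_iInter.2 fun _ =>
              hτ ⟨x.2.1, ⟨x.1 0, fun y hy => Set.mem_iInter.1 (x.2.2 hy) 0⟩⟩ hy⟩⟩ :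
          GenQ I M U p 0) := by
      refine genQ_ext I M U p ?_ rfl
      funext k
      have hk : k = 0 := Fin.eq_zero k
      subst hk
      show (Fin.cons _ x.1 : Fin 2 → ι) ((1 : Fin 2).succAbove 0) = _
      rfl
    rw [hone]
    simp only [Fin.val_zero, pow_zero, one_smul, Fin.val_one, pow_one, neg_smul]
    abel
  exact DFunLike.congr_fun h x

lemma homotopy3 (q : ℕ) (x : LvC I M U p (q + 1)) :
    rhoQ I M U p τ hτ q (delStar I M U p q x) +
      delStar I M U p (q + 1) (rhoQ I M U p τ hτ (q + 1) x) = x := by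
  have h : (rhoQ I M U p τ hτ q).comp (delStar I M U p q)
      + (delStar I M U p (q + 1)).comp (rhoQ I M U p τ hτ (q + 1))
      = AddMonoidHom.id (LvC I M U p (q + 1)) := by
    refine FreeAbelianGroup.lift_ext _ _ fun x => ?_
    show rhoQ I M U p τ hτ q (delStar I M U p q (FreeAbelianGroup.of x))
        + delStar I M U p (q + 1) (rhoQ I M U p τ hτ (q + 1) (FreeAbelianGroup.of x))
        = FreeAbelianGroup.of x
    rw [delStar_of, rhoQ_of, delStar_of]
    erw [map_sum]
    rw [Fin.sum_univ_succ (n := q + 2)]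
    rw [show dropF I M U p (q + 1) 0 (rhoGen I M U p τ hτ x) = x from
      dropF_zero_rhoGen I M U p τ hτ x]
    simp only [Fin.val_zero, pow_zero, one_smul]
    have key : ∀ j : Fin (q + 2),
        rhoQ I M U p τ hτ q ((-1 : ℤ) ^ (j : ℕ) • FreeAbelianGroup.of (dropF I M U p q j x))
          = (-1 : ℤ) ^ (j : ℕ)
              • FreeAbelianGroup.of (dropF I M U p (q + 1) j.succ (rhoGen I M U p τ hτ x)) := by
      intro j
      erw [map_zsmul, rhoQ_of, dropF_succ_rhoGen]
      rfl
    rw [Finset.sum_congr rfl fun j _ => key j]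
    have hcancel :
        (∑ j : Fin (q + 2),
            (-1 : ℤ) ^ (j : ℕ)
              • FreeAbelianGroup.of (dropF I M U p (q + 1) j.succ (rhoGen I M U p τ hτ x)))
          + (∑ j : Fin (q + 2),
              (-1 : ℤ) ^ ((j.succ : Fin (q + 3)) : ℕ)
                • FreeAbelianGroup.of (dropF I M U p (q + 1) j.succ (rhoGen I M U p τ hτ x)))
          = 0 := by
      rw [← Finset.sum_add_distrib]
      refine Finset.sum_eq_zero fun j _ => ?_
      rw [Fin.val_succ, pow_succ, mul_neg_one, neg_smul]
      abel
    calc _ = (FreeAbelianGroup.of x : LvC I M U p (q + 1))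
          + ((∑ j : Fin (q + 2),
              (-1 : ℤ) ^ (j : ℕ)
                • FreeAbelianGroup.of (dropF I M U p (q + 1) j.succ (rhoGen I M U p τ hτ x)))
            + (∑ j : Fin (q + 2),
                (-1 : ℤ) ^ ((j.succ : Fin (q + 3)) : ℕ)
                  • FreeAbelianGroup.of
                      (dropF I M U p (q + 1) j.succ (rhoGen I M U p τ hτ x)))) := by exact add_left_comm _ _ _
      _ = FreeAbelianGroup.of x := by rw [hcancel, add_zero]
  exact DFunLike.congr_fun h x

end

/-- Let `U → M` be a covering of the manifold `M` by disjoint open sets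
`{U_α}` and `C_p(M, U)` the group of `U`-small smooth singular `p`-chains.  Choosing a
section `τ` of the pushforward `υ_* : C_p(U) → C_p(M,U)` (on generators: an index `τ σ`
with `im σ ⊆ U_{τσ}` for every small simplex `σ`), the operator `ρ` defined by
`ρ(σ) = τ(σ)` on `C_p(M,U)` and `ρ(σ) = (τ ∘ υ_* ∘ pr_*)(σ) ×_M σ` on the chains of the
fibre products is a contracting homotopy for the augmented complex
`0 ← C_p(M,U) ← C_p(U) ← C_p(U ×_M U) ← ⋯`; hence this complex is exact. -/
theorem stmt6
    [IsManifold I ((⊤ : ℕ∞) : WithTop ℕ∞) M]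
    (hUopen : ∀ α, IsOpen (U α))
    (hUcov : (⋃ α, U α) = Set.univ)
    (hτ : ∀ σ : SmallS I M U p,
      Set.MapsTo σ.1.toFun (stdSimplex ℝ (Fin (p + 1))) (U (τ σ))) :
    -- contracting homotopy identities:
    (∀ x : CSmall I M U p, upsStar I M U p (rhoSmall I M U p τ hτ x) = x) ∧
    (∀ x : LvC I M U p 0,
      rhoSmall I M U p τ hτ (upsStar I M U p x) + delStar I M U p 0 (rhoQ I M U p τ hτ 0 x)
        = x) ∧
    (∀ (q : ℕ) (x : LvC I M U p (q + 1)),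
      rhoQ I M U p τ hτ q (delStar I M U p q x) +
        delStar I M U p (q + 1) (rhoQ I M U p τ hτ (q + 1) x) = x) ∧
    -- hence the augmented complex is exact:
    Function.Surjective (upsStar I M U p) ∧
    (∀ x : LvC I M U p 0, upsStar I M U p x = 0 → ∃ y : LvC I M U p 1, delStar I M U p 0 y = x) ∧
    (∀ (q : ℕ) (x : LvC I M U p (q + 1)), delStar I M U p q x = 0 →
      ∃ y : LvC I M U p (q + 2), delStar I M U p (q + 1) y = x) := by
  refine ⟨homotopy1 I M U p τ hτ, homotopy2 I M U p τ hτ, homotopy3 I M U p τ hτ, ?_, ?_, ?_⟩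
  · intro x
    exact ⟨rhoSmall I M U p τ hτ x, homotopy1 I M U p τ hτ x⟩
  · intro x hx
    refine ⟨rhoQ I M U p τ hτ 0 x, ?_⟩
    have h2 := homotopy2 I M U p τ hτ x
    rwa [hx, map_zero, zero_add] at h2
  · intro q x hx
    refine ⟨rhoQ I M U p τ hτ (q + 1) x, ?_⟩
    have h3 := homotopy3 I M U p τ hτ q x
    rwa [hx, map_zero, zero_add] at h3

end Stmt6

end
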